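/- For every set A of infinite regular cardinals, pcf(A) ⊆ spec(A). -/

import Mathlib

universe u

open Cardinal Set

namespace TukeySpec

/-- A subset `S` of a preorder is cofinal if every element has an upper bound in `S`. -/
def IsCofinal {P : Type*} [Preorder P] (S : Set P) : Prop :=
  ∀ p : P, ∃ s ∈ S, p ≤ s

/-- `Q` is a Tukey quotient of `P` (i.e. `P ≥_T Q`): there is a map `P → Q`
sending cofinal sets to cofinal sets. -/
def TukeyQuot (P : Type*) (Q : Type*) [Preorder P] [Preorder Q] : Prop :=
  ∃ φ : P → Q, ∀ S : Set P, IsCofinal S → IsCofinal (φ '' S)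

/-- `P` has calibre `(κ, l, m)`. -/
def Calibre (P : Type u) [Preorder P] (κ l m : Cardinal.{u}) : Prop :=
  ∀ P' : Set P, #P' = κ → ∃ R ⊆ P', #R = l ∧ ∀ B ⊆ R, #B = m → BddAbove B

/-- `P` has calibre `κ` (the simplified form): every `κ`-sized subset has a
`κ`-sized subset which is bounded in `P`. -/
def CalibreSimple (P : Type u) [Preorder P] (κ : Cardinal.{u}) : Prop :=
  ∀ P' : Set P, #P' = κ → ∃ R ⊆ P', #R = κ ∧ BddAbove R

/-- The Tukey spectrum of a poset: all regular cardinals `κ` with `P ≥_T κ`,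
where `κ` carries its usual (ordinal) ordering. -/
def specPoset (P : Type u) [Preorder P] : Set Cardinal.{u} :=
  {κ | κ.IsRegular ∧ TukeyQuot P ↥(Set.Iio κ.ord)}

/-- The product `∏A` of a set of cardinals: all functions on `A` with
`f a < a` (as ordinals). -/
def piSet (A : Set Cardinal.{0}) : Set (↥A → Ordinal.{0}) :=
  {f | ∀ a : ↥A, f a < (a : Cardinal).ord}

/-- A family of members of `∏A` is bounded if it has an upper bound in `(∏A, ≤)`
(pointwise order). -/
def BddIn (A : Set Cardinal.{0}) (S : Set (↥A → Ordinal.{0})) : Prop :=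
  ∃ h ∈ piSet A, ∀ f ∈ S, ∀ a : ↥A, f a ≤ h a

/-- The Tukey spectrum of a set `A` of regular cardinals: all regular `κ` for which
there is a `κ`-sized family `F ⊆ ∏A` all of whose `κ`-sized subfamilies are
unbounded in `(∏A, ≤)`. -/
def spec (A : Set Cardinal.{0}) : Set Cardinal.{0} :=
  {κ | κ.IsRegular ∧ ∃ F ⊆ piSet A, #F = Cardinal.lift.{1} κ ∧
    ∀ F₀ ⊆ F, #F₀ = Cardinal.lift.{1} κ → ¬ BddIn A F₀}

/-- `cf(∏A/D)`: the least cardinality of a subset of `∏A` which is cofinal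
modulo the ultrafilter `D`. -/
noncomputable def cofUlt (A : Set Cardinal.{0}) (D : Ultrafilter ↥A) : Cardinal.{1} :=
  sInf {c : Cardinal.{1} | ∃ S ⊆ piSet A, #S = c ∧
    ∀ f ∈ piSet A, ∃ g ∈ S, {a : ↥A | f a ≤ g a} ∈ D}

/-- `pcf(A)`: the set of all cofinalities `cf(∏A/D)` as `D` ranges over
ultrafilters on `A`. -/
def pcf (A : Set Cardinal.{0}) : Set Cardinal.{0} :=
  {κ | ∃ D : Ultrafilter ↥A, Cardinal.lift.{1} κ = cofUlt A D}

/-- `ub(F)`: the set of coordinates `a ∈ A` where the family `F` is unbounded. -/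
def ub (A : Set Cardinal.{0}) (F : Set (↥A → Ordinal.{0})) : Set ↥A :=
  {a | ∀ β < (a : Cardinal).ord, ∃ f ∈ F, β < f a}

/-- The strong part of the Tukey spectrum: `l ∈ spec*(A)` iff there is an
`l`-sized family `F ⊆ ∏A` such that every `l`-sized subfamily has a set of
unbounded coordinates which is unbounded in `sup A`. -/
def specStarMem (A : Set Cardinal.{0}) (l : Cardinal.{0}) : Prop :=
  l.IsRegular ∧ ∃ F ⊆ piSet A, #F = Cardinal.lift.{1} l ∧
    ∀ F₀ ⊆ F, #F₀ = Cardinal.lift.{1} l →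
      ∀ β < sSup A, ∃ a ∈ ub A F₀, β < (a : Cardinal)

/-- `κ` is a limit point of the set `X` of cardinals. -/
def IsLimitPt (X : Set Cardinal.{0}) (κ : Cardinal.{0}) : Prop :=
  ∀ β < κ, ∃ x ∈ X, β < x ∧ x < κ

/-- `C` is a closed unbounded subset of `κ`. -/
def IsClubIn (C : Set Ordinal.{0}) (κ : Ordinal.{0}) : Prop :=
  C ⊆ Set.Iio κ ∧ (∀ β < κ, ∃ o ∈ C, β < o) ∧
    ∀ β < κ, β ≠ 0 → (∀ γ < β, ∃ o ∈ C, γ < o ∧ o < β) → β ∈ C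

/-- A set `S` of cardinals is stationary in `κ`: it meets every club of `κ`. -/
def StatIn (S : Set Cardinal.{0}) (κ : Cardinal.{0}) : Prop :=
  ∀ C : Set Ordinal.{0}, IsClubIn C κ.ord → ∃ a ∈ S, a.ord ∈ C

/-- `κ` is Mahlo: strongly inaccessible and the regular cardinals below `κ`
are stationary in `κ`. -/
def IsMahlo (κ : Cardinal.{0}) : Prop :=
  κ.IsInaccessible ∧ StatIn {a | a < κ ∧ a.IsRegular} κ

/-- `κ` is weakly compact: strongly inaccessible and `κ → (κ)²₂`. -/
def IsWeaklyCompact (κ : Cardinal.{0}) : Prop :=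
  κ.IsInaccessible ∧
    ∀ c : Ordinal.{0} → Ordinal.{0} → Bool,
      ∃ H ⊆ Set.Iio κ.ord, #H = Cardinal.lift.{1} κ ∧
        ∃ b : Bool, ∀ α ∈ H, ∀ β ∈ H, α < β → c α β = b

/-- `θ` carries a Jónsson algebra: there is `F` from finite subsets of `θ` to `θ`
such that `F` applied to finite subsets of any `θ`-sized `H ⊆ θ` covers `θ`. -/
def CarriesJonsson (θ : Cardinal.{0}) : Prop :=
  ∃ F : Finset Ordinal.{0} → Ordinal.{0},
    (∀ s : Finset Ordinal.{0}, (↑s : Set Ordinal) ⊆ Set.Iio θ.ord → F s < θ.ord) ∧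
    ∀ H ⊆ Set.Iio θ.ord, #H = Cardinal.lift.{1} θ →
      ∀ γ < θ.ord, ∃ s : Finset Ordinal.{0}, (↑s : Set Ordinal) ⊆ H ∧ F s = γ

/-- `cf(∏A/J_bd)`: the least cardinality of a subset of `∏A` cofinal modulo
the ideal of bounded subsets of `A`. -/
noncomputable def cofJbd (A : Set Cardinal.{0}) : Cardinal.{1} :=
  sInf {c : Cardinal.{1} | ∃ S ⊆ piSet A, #S = c ∧
    ∀ f ∈ piSet A, ∃ g ∈ S, ∃ b < sSup A, ∀ a : ↥A, b < (a : Cardinal) → f a ≤ g a}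

/-- `μ` is a limit cardinal. -/
def IsLimitCard (μ : Cardinal.{0}) : Prop :=
  ℵ₀ ≤ μ ∧ ∀ ν < μ, Order.succ ν < μ

/-- For any set `A` of infinite regular cardinals, `pcf(A) ⊆ spec(A)`. -/
theorem statement4 (A : Set Cardinal.{0}) (hA : ∀ a ∈ A, a.IsRegular) :
    pcf A ⊆ spec A := by
  rintro κ ⟨D, hD⟩
  -- basic facts about piSet
  have hlim : ∀ a : ↥A, Order.IsSuccLimit ((a : Cardinal).ord) :=
    fun a => Cardinal.isSuccLimit_ord (hA a a.2).aleph0_le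
  have hzero : (fun _ => 0 : ↥A → Ordinal.{0}) ∈ piSet A := fun a => (hlim a).pos
  have hsucc : ∀ f ∈ piSet A, (fun a => f a + 1) ∈ piSet A := by
    intro f hf a
    show f a + 1 < (a : Cardinal).ord
    rw [Ordinal.add_one_eq_succ]
    exact (hlim a).succ_lt (hf a)
  have hkey : ∀ x y : Ordinal.{0}, x + 1 ≤ y → x < y := by
    intro x y hxy
    refine lt_of_lt_of_le ?_ hxy
    rw [Ordinal.add_one_eq_succ]
    exact Order.lt_succ x
  -- the quasi-order mod D
  set LE : (↥A → Ordinal.{0}) → (↥A → Ordinal.{0}) → Prop :=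
    fun f g => {a | f a ≤ g a} ∈ D with hLE
  have hLEptwise : ∀ f g : ↥A → Ordinal.{0}, (∀ a, f a ≤ g a) → LE f g := by
    intro f g h
    have heq : {a : ↥A | f a ≤ g a} = Set.univ := eq_univ_of_forall h
    show {a : ↥A | f a ≤ g a} ∈ D
    rw [heq]
    exact Filter.univ_mem
  have hrefl : ∀ f, LE f f := fun f => hLEptwise f f (fun _ => le_rfl)
  have htrans : ∀ {f g h}, LE f g → LE g h → LE f h := by
    intro f g h h1 h2
    refine Filter.mem_of_superset (Filter.inter_mem h1 h2) ?_
    rintro a ⟨x, y⟩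
    have x' : f a ≤ g a := x
    have y' : g a ≤ h a := y
    exact le_trans x' y'
  have htotal : ∀ f g, LE f g ∨ LE g f := by
    intro f g
    rcases Ultrafilter.mem_or_compl_mem D {a | f a ≤ g a} with h | h
    · exact Or.inl h
    · refine Or.inr (Filter.mem_of_superset h ?_)
      intro a ha
      simp only [Set.mem_compl_iff, Set.mem_setOf_eq] at ha
      exact le_of_not_ge ha
  have habs : ∀ f, ¬ LE (fun a => f a + 1) f := by
    intro f hf
    obtain ⟨a, ha⟩ := Ultrafilter.nonempty_of_mem hf
    exact absurd (hkey _ _ ha) (lt_irrefl _)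
  -- the minimal cofinal set S
  set T : Set Cardinal.{1} := {c : Cardinal.{1} | ∃ S ⊆ piSet A, #S = c ∧
    ∀ f ∈ piSet A, ∃ g ∈ S, {a : ↥A | f a ≤ g a} ∈ D} with hTdef
  have hTne : T.Nonempty := ⟨#(piSet A), piSet A, subset_rfl, rfl,
    fun f hf => ⟨f, hf, hrefl f⟩⟩
  have hcof : cofUlt A D = sInf T := rfl
  obtain ⟨S, hSsub, hScard, hScof⟩ : cofUlt A D ∈ T := hcof ▸ csInf_mem hTne
  have hmin : ∀ X ⊆ piSet A, (∀ f ∈ piSet A, ∃ g ∈ X, {a : ↥A | f a ≤ g a} ∈ D) →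
      cofUlt A D ≤ #X := by
    intro X hX h
    rw [hcof]
    exact csInf_le' ⟨X, hX, rfl, h⟩
  have hbound : ∀ X ⊆ piSet A, #X < cofUlt A D → ∃ p ∈ piSet A, ∀ f ∈ X, LE f p := by
    intro X hX hlt
    have hnc : ¬ ∀ f ∈ piSet A, ∃ g ∈ X, {a : ↥A | f a ≤ g a} ∈ D :=
      fun h => absurd (hmin X hX h) (not_le.mpr hlt)
    push_neg at hnc
    obtain ⟨f, hf, hfg⟩ := hnc
    exact ⟨f, hf, fun g hg => (htotal f g).resolve_left (hfg g hg)⟩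
  have hnobound : ¬ ∃ p ∈ piSet A, ∀ g ∈ S, LE g p := by
    rintro ⟨p, hp, hbd⟩
    obtain ⟨g, hgS, hle⟩ := hScof _ (hsucc p hp)
    exact habs p (htrans hle (hbd g hgS))
  -- cofUlt is infinite
  have haleph : ℵ₀ ≤ cofUlt A D := by
    by_contra h
    push_neg at h
    have hSfin : S.Finite := by
      rw [← Cardinal.lt_aleph0_iff_set_finite, hScard]; exact h
    have : ∃ p ∈ piSet A, ∀ f ∈ S, ∀ a, f a ≤ p a := by
      refine Set.Finite.induction_on_subset (motive := fun X _ => ∃ p ∈ piSet A, ∀ f ∈ X, ∀ a, f a ≤ p a) S hSfin ⟨_, hzero, by simp⟩ ?_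
      rintro f X hfS - - ⟨p, hp, hbd⟩
      refine ⟨fun a => max (f a) (p a), fun a => max_lt (hSsub hfS a) (hp a), ?_⟩
      rintro g (rfl | hg) a
      · exact le_max_left _ _
      · exact (hbd g hg a).trans (le_max_right _ _)
    obtain ⟨p, hp, hbd⟩ := this
    exact hnobound ⟨p, hp, fun g hg => hLEptwise g p (hbd g hg)⟩
  -- cofUlt is regular
  have hcreg : (cofUlt A D).IsRegular := by
    refine ⟨haleph, ?_⟩
    by_contra hcof2
    push_neg at hcof2
    set o : Ordinal.{1} := (cofUlt A D).ord with ho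
    have hcard : #o.ToType = #S := by
      rw [Cardinal.mk_toType, ho, Cardinal.card_ord, hScard]
    obtain ⟨E2⟩ : Nonempty (o.ToType ≃ ↥S) := Cardinal.eq.mp hcard
    obtain ⟨U, hU, hUcard⟩ := Order.exists_cof_eq o.ToType
    rw [Ordinal.cof_toType] at hUcard
    have hbd : ∀ u : ↥U, ∃ p ∈ piSet A,
        ∀ f ∈ Subtype.val '' (E2 '' Set.Iic (u : o.ToType)), LE f p := by
      intro u
      refine hbound _ ?_ ?_
      · rintro f ⟨g, -, rfl⟩; exact hSsub g.2
      · calc #(Subtype.val '' (E2 '' Set.Iic (u : o.ToType)))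
            ≤ #(E2 '' Set.Iic (u : o.ToType)) := Cardinal.mk_image_le
          _ ≤ #(Set.Iic (u : o.ToType)) := Cardinal.mk_image_le
          _ ≤ #(Set.Iio (u : o.ToType)) + 1 := by
              rw [← Set.Iio_insert]; exact Cardinal.mk_insert_le
          _ < cofUlt A D := by
              refine Cardinal.add_lt_of_lt haleph ?_ (Cardinal.one_lt_aleph0.trans_le haleph)
              have ht := @Ordinal.typein_lt_type o.ToType (· < ·) isWellOrder_lt u.val
              rw [Ordinal.type_toType] at ht
              have h2 : (@Ordinal.typein o.ToType (· < ·) isWellOrder_lt u.val).card < cofUlt A D :=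
                Cardinal.lt_ord.mp ht
              have h1 : #(Set.Iio (u : o.ToType)) =
                  (@Ordinal.typein o.ToType (· < ·) isWellOrder_lt u.val).card :=
                @Ordinal.card_typein o.ToType (· < ·) isWellOrder_lt u.val
              rw [h1]
              exact h2
    choose P hP1 hP2 using hbd
    have hPcof : ∀ f ∈ piSet A, ∃ g ∈ Set.range P, {a : ↥A | f a ≤ g a} ∈ D := by
      intro f hf
      obtain ⟨g, hgS, hle⟩ := hScof f hf
      set x : o.ToType := E2.symm ⟨g, hgS⟩ with hx
      obtain ⟨u, hu, hux⟩ := hU x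
      have hgmem : g ∈ Subtype.val '' (E2 '' Set.Iic ((⟨u, hu⟩ : ↥U) : o.ToType)) := by
        refine ⟨⟨g, hgS⟩, ⟨x, hux, ?_⟩, rfl⟩
        rw [hx, Equiv.apply_symm_apply]
      exact ⟨P ⟨u, hu⟩, ⟨⟨u, hu⟩, rfl⟩, htrans hle (hP2 ⟨u, hu⟩ g hgmem)⟩
    have hle1 : cofUlt A D ≤ #(Set.range P) := by
      refine hmin _ ?_ hPcof
      rintro f ⟨u, rfl⟩; exact hP1 u
    have hle2 : #(Set.range P) ≤ #U := Cardinal.mk_range_le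
    exact absurd ((hle1.trans hle2).trans_eq hUcard) (not_le.mpr hcof2)
  -- enumeration of S by ordinals below κ.ord
  have hIiocard : #(Set.Iio κ.ord) = #S := by
    rw [Ordinal.mk_Iio_ordinal, Cardinal.card_ord, hScard, ← hD]
  obtain ⟨E⟩ : Nonempty (↥(Set.Iio κ.ord) ≃ ↥S) := Cardinal.eq.mp hIiocard
  set en : Ordinal.{0} → (↥A → Ordinal.{0}) :=
    fun α => if h : α < κ.ord then ((E ⟨α, h⟩ : ↥S) : ↥A → Ordinal.{0}) else fun _ => 0
    with hen
  have henmem : ∀ α (h : α < κ.ord), en α ∈ S := by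
    intro α h
    simp only [hen, dif_pos h]
    exact (E ⟨α, h⟩).2
  have hensurj : ∀ g ∈ S, ∃ α, ∃ h : α < κ.ord, en α = g := by
    intro g hg
    obtain ⟨⟨α, hα⟩, hEg⟩ : ∃ x : ↥(Set.Iio κ.ord), E x = ⟨g, hg⟩ :=
      ⟨E.symm ⟨g, hg⟩, Equiv.apply_symm_apply _ _⟩
    refine ⟨α, Set.mem_Iio.mp hα, ?_⟩
    simp only [hen, dif_pos (Set.mem_Iio.mp hα)]
    rw [show (⟨α, Set.mem_Iio.mp hα⟩ : ↥(Set.Iio κ.ord)) = ⟨α, hα⟩ from rfl, hEg]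
  -- existence of upper bounds at each step of the recursion
  have hex : ∀ (α : Ordinal.{0}) (prev : Ordinal.{0} → (↥A → Ordinal.{0})),
      ∃ p : ↥A → Ordinal.{0}, α < κ.ord → p ∈ piSet A ∧
        (∀ β, β < α → prev β ∈ piSet A → LE (fun a => prev β a + 1) p) ∧ LE (en α) p := by
    intro α prev
    by_cases h : α < κ.ord
    · have hXsub : ((fun f => (fun a : ↥A => f a + 1)) '' ((prev '' Set.Iio α) ∩ piSet A)
          ∪ {en α}) ⊆ piSet A := by
        rintro f (⟨g, ⟨-, hg⟩, rfl⟩ | rfl)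
        · exact hsucc g hg
        · exact hSsub (henmem α h)
      have hXcard : #(((fun f => (fun a : ↥A => f a + 1)) '' ((prev '' Set.Iio α) ∩ piSet A)
          ∪ {en α}) : Set (↥A → Ordinal.{0})) < cofUlt A D := by
        calc #(((fun f => (fun a : ↥A => f a + 1)) '' ((prev '' Set.Iio α) ∩ piSet A)
              ∪ {en α}) : Set (↥A → Ordinal.{0}))
            ≤ #((fun f => (fun a : ↥A => f a + 1)) '' ((prev '' Set.Iio α) ∩ piSet A))
              + #({en α} : Set (↥A → Ordinal.{0})) := Cardinal.mk_union_le _ _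
          _ ≤ #(Set.Iio α) + 1 := by
              refine add_le_add ?_ (le_of_eq (Cardinal.mk_singleton _))
              exact Cardinal.mk_image_le.trans
                ((Cardinal.mk_le_mk_of_subset Set.inter_subset_left).trans Cardinal.mk_image_le)
          _ < cofUlt A D := by
              rw [Ordinal.mk_Iio_ordinal]
              refine Cardinal.add_lt_of_lt haleph ?_ (Cardinal.one_lt_aleph0.trans_le haleph)
              rw [← hD]
              exact Cardinal.lift_lt.mpr (Cardinal.lt_ord.mp h)
      obtain ⟨p, hp, hbd⟩ := hbound _ hXsub hXcard
      refine ⟨p, fun _ => ⟨hp, ?_, ?_⟩⟩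
      · intro β hβ hprev
        exact hbd _ (Set.mem_union_left _ ⟨prev β, ⟨⟨β, hβ, rfl⟩, hprev⟩, rfl⟩)
      · exact hbd _ (Set.mem_union_right _ rfl)
    · exact ⟨fun _ => 0, fun h' => absurd h' h⟩
  choose pick hpick using hex
  set seqF : Ordinal.{0} → (↥A → Ordinal.{0}) :=
    WellFounded.fix Ordinal.lt_wf
      (fun α IH => pick α (fun β => if h : β < α then IH β h else fun _ => 0)) with hseqF
  have hseq_eq : ∀ α, seqF α = pick α (fun β => if h : β < α then seqF β else fun _ => 0) :=
    fun α => WellFounded.fix_eq _ _ _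
  have hseqmem : ∀ α, α < κ.ord → seqF α ∈ piSet A := by
    intro α h
    rw [hseq_eq]
    exact (hpick α _ h).1
  have hseqen : ∀ α, α < κ.ord → LE (en α) (seqF α) := by
    intro α h
    rw [hseq_eq]
    exact (hpick α _ h).2.2
  have hseqmono : ∀ β α, β < α → α < κ.ord → LE (fun a => seqF β a + 1) (seqF α) := by
    intro β α hβα hα
    have h2 := (hpick α (fun β' => if h : β' < α then seqF β' else fun _ => 0) hα).2.1 β hβα
    simp only [dif_pos hβα] at h2
    rw [hseq_eq α]
    exact h2 (hseqmem β (hβα.trans hα))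
  have hseqinj : Set.InjOn seqF (Set.Iio κ.ord) := by
    intro β hβ α hα heq
    by_contra hne
    rcases lt_or_gt_of_ne hne with hlt | hlt
    · have hm := hseqmono β α hlt hα
      rw [heq] at hm
      exact habs _ hm
    · have hm := hseqmono α β hlt hβ
      rw [← heq] at hm
      exact habs _ hm
  -- κ is regular
  have hκreg : κ.IsRegular := by
    constructor
    · have h1 := hcreg.1
      rw [← hD, Cardinal.aleph0_le_lift] at h1
      exact h1
    · have h2 := hcreg.2
      rw [← hD, ← Cardinal.lift_ord, ← Ordinal.lift_cof, Cardinal.lift_le] at h2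
      exact h2
  have hκlim : Order.IsSuccLimit (κ.ord) := Cardinal.isSuccLimit_ord hκreg.aleph0_le
  refine ⟨hκreg, seqF '' Set.Iio κ.ord, ?_, ?_, ?_⟩
  · rintro f ⟨α, hα, rfl⟩
    exact hseqmem α hα
  · rw [Cardinal.mk_image_eq_of_injOn _ _ hseqinj, Ordinal.mk_Iio_ordinal, Cardinal.card_ord]
  · rintro F₀ hsub hcard ⟨h, hhmem, hhbd⟩
    have himg : seqF '' (Set.Iio κ.ord ∩ seqF ⁻¹' F₀) = F₀ := by
      apply Set.Subset.antisymm
      · rintro f ⟨α, ⟨-, hα2⟩, rfl⟩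
        exact hα2
      · intro f hf
        obtain ⟨α, hα, rfl⟩ := hsub hf
        exact ⟨α, ⟨hα, hf⟩, rfl⟩
    have hIcard : #(Set.Iio κ.ord ∩ seqF ⁻¹' F₀ : Set Ordinal.{0}) = Cardinal.lift.{1} κ := by
      have h3 := Cardinal.mk_image_eq_of_injOn seqF (Set.Iio κ.ord ∩ seqF ⁻¹' F₀)
        (hseqinj.mono Set.inter_subset_left)
      rw [himg] at h3
      rw [← h3]
      exact hcard
    have hIunb : ∀ γ, γ < κ.ord → ∃ α ∈ Set.Iio κ.ord ∩ seqF ⁻¹' F₀, γ ≤ α := by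
      intro γ hγ
      by_contra hcon
      push_neg at hcon
      have hsubI : (Set.Iio κ.ord ∩ seqF ⁻¹' F₀ : Set Ordinal.{0}) ⊆ Set.Iio γ :=
        fun α hα => hcon α hα
      have hle := (Cardinal.mk_le_mk_of_subset hsubI).trans_eq (Ordinal.mk_Iio_ordinal γ)
      rw [hIcard] at hle
      have hlt := Cardinal.lift_lt.mpr (Cardinal.lt_ord.mp hγ)
      exact absurd (hle.trans_lt hlt) (lt_irrefl _)
    obtain ⟨g, hgS, hg⟩ := hScof _ (hsucc h hhmem)
    obtain ⟨δ, hδ, hen_eq⟩ := hensurj g hgS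
    rw [← hen_eq] at hg
    have hhδ : LE (fun a => h a + 1) (seqF δ) := htrans hg (hseqen δ hδ)
    obtain ⟨α, hαI, hδα⟩ := hIunb (δ + 1)
      (by rw [Ordinal.add_one_eq_succ]; exact hκlim.succ_lt hδ)
    have hδltα : δ < α := hkey δ α hδα
    have hm := hseqmono δ α hδltα hαI.1
    have hbdα : ∀ a, seqF α a ≤ h a := hhbd _ hαI.2
    obtain ⟨a, ha1, ha2⟩ := Ultrafilter.nonempty_of_mem (Filter.inter_mem hhδ hm)
    have c1 : h a + 1 ≤ seqF δ a := ha1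
    have c2 : seqF δ a + 1 ≤ seqF α a := ha2
    exact absurd ((hkey _ _ c1).trans ((hkey _ _ c2).trans_le (hbdα a))) (lt_irrefl _)

end TukeySpec
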